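/- (Optimality of the dynamic-programming policy, Theorem 1.) Consider a finite-horizon discrete-time Markov decision process with horizon T, finite nonempty state space S, finite nonempty action space A, stage costs r : Fin T → S → A → ℝ, transition kernels P : Fin T → S → A → PMF S, and terminal cost g : S → ℝ. Let π* be a policy such that for every t < T and state s, π*_t(s) minimizes a ↦ r_t(s,a) + Σ_{s'} (P_t(s,a))(s') · V_{t+1}(s'), where V is the backward-induction value function (V_T = g, V_t(s) = min over a of that same expression). Then π* is an optimal policy: for every initial state s, the expected total cost E[ Σ_{t=0}^{T-1} r_t(s_t, π*_t(s_t)) + g(s_T) ] of following π* from time 0 in state s is less than or equal to the expected total cost of following any other Markov policy π : Fin T → S → A from time 0 in state s. -/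

import Mathlib

/-- **Optimality of the dynamic-programming policy, Theorem 1.**
For a finite-horizon discrete-time MDP with horizon `T`, finite nonempty state space `S`,
finite nonempty action space `A`, stage costs `r`, transition kernels `P`, and terminal
cost `g`, let `V` be the backward-induction value functions (`V T = g`,
`V t s = min_{a} ( r t s a + ∑ s', (P t s a) s' • V (t+1) s' )`), and let `πs` be a policy
attaining the minimum in the definition of `V t s` for every `t < T` and state `s`.
Then `πs` is optimal: for every initial state `s`, the expected total cost `Jstar 0 s` of
following `πs` from time `0` in state `s` is at most the expected total cost `J 0 s` of
following any other Markov policy `π` from time `0` in state `s` (the expected costs-to-go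
`Jstar`, `J` are characterized by the backward recursions expressing the expectations as
finite sums weighted by the transition probabilities). -/
theorem dp_policy_optimal
    (T : ℕ) (S A : Type) [Fintype S] [Nonempty S] [Fintype A] [Nonempty A]
    (r : Fin T → S → A → ℝ) (P : Fin T → S → A → PMF S) (g : S → ℝ)
    (V : Fin (T + 1) → S → ℝ)
    (hVT : ∀ s : S, V (Fin.last T) s = g s)
    (hV : ∀ (t : Fin T) (s : S),
      V t.castSucc s
        = Finset.univ.inf' Finset.univ_nonempty
            (fun a : A => r t s a + ∑ s' : S, ((P t s a) s').toReal * V t.succ s'))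
    (πs : Fin T → S → A)
    (hopt : ∀ (t : Fin T) (s : S),
      r t s (πs t s) + ∑ s' : S, ((P t s (πs t s)) s').toReal * V t.succ s'
        = V t.castSucc s)
    (Jstar : Fin (T + 1) → S → ℝ)
    (hJstarT : ∀ s : S, Jstar (Fin.last T) s = g s)
    (hJstar : ∀ (t : Fin T) (s : S),
      Jstar t.castSucc s
        = r t s (πs t s) + ∑ s' : S, ((P t s (πs t s)) s').toReal * Jstar t.succ s')
    (π : Fin T → S → A)
    (J : Fin (T + 1) → S → ℝ)
    (hJT : ∀ s : S, J (Fin.last T) s = g s)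
    (hJ : ∀ (t : Fin T) (s : S),
      J t.castSucc s
        = r t s (π t s) + ∑ s' : S, ((P t s (π t s)) s').toReal * J t.succ s') :
    ∀ s : S, Jstar 0 s ≤ J 0 s := by
  have key : ∀ t : Fin (T + 1), ∀ s : S, Jstar t s = V t s ∧ V t s ≤ J t s := by
    refine Fin.reverseInduction ?_ ?_
    · intro s
      constructor
      · rw [hJstarT, hVT]
      · rw [hJT, hVT]
    · intro t ih s
      have hnn : ∀ (a : A) (s' : S), 0 ≤ ((P t s a) s').toReal := fun a s' =>
        ENNReal.toReal_nonneg
      constructor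
      · rw [hJstar, ← hopt t s]
        congr 1
        apply Finset.sum_congr rfl
        intro s' _
        rw [(ih s').1]
      · rw [hJ, ← hopt t s]
        have h1 : r t s (πs t s) + ∑ s' : S, ((P t s (πs t s)) s').toReal * V t.succ s'
            ≤ r t s (π t s) + ∑ s' : S, ((P t s (π t s)) s').toReal * V t.succ s' := by
          rw [hopt t s, hV t s]
          exact Finset.inf'_le _ (Finset.mem_univ (π t s))
        refine h1.trans (add_le_add_right (Finset.sum_le_sum fun s' _ => ?_) _)
        exact mul_le_mul_of_nonneg_left (ih s').2 (hnn _ s')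
  intro s
  exact (key 0 s).1 ▸ (key 0 s).2
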